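/- Assume A has colimits of chains indexed by the poset ℕ and that F preserves such colimits. Assume given morphisms Q^n(f) : Q^n(X) → Q^n(Y) (for each f : X → Y in I and n ≥ 1) satisfying Q^n(f) ∘ a^X_n = a^Y_n ∘ E^n(f) and ζ^Y_n ∘ F(Q^n(f)) = D̂(f) ∘ ζ^X_n, and morphisms s̄^X_n : Q^n(X) → Q^{n+1}(X) satisfying s̄^X_n ∘ a^X_n = a^X_{n+1} ∘ s^X_n and ζ^X_{n+1} ∘ F(s̄^X_n) = ρ_X ∘ ζ^X_n. For each object X of I let R(X), with morphisms t^X_n : Q^n(X) → R(X) satisfying t^X_n = t^X_{n+1} ∘ s̄^X_n, be a colimit of the chain Q¹(X) → Q²(X) → ⋯ with transition morphisms s̄^X_n, and for f : X → Y let R(f) : R(X) → R(Y) be the unique morphism with R(f) ∘ t^X_n = t^Y_n ∘ Q^n(f) for all n ≥ 1. Then: (1) for each X there exists a unique morphism δ^X : F(R(X)) → D(X) such that δ^X ∘ F(t^X_n) = μ_X ∘ ζ^X_n for all n ≥ 1; (2) each δ^X is an isomorphism; and (3) for every f : X → Y, δ^Y ∘ F(R(f)) = D(f) ∘ δ^X.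 In particular δ is a natural isomorphism between the composite of R with F and the functor D, so R is a lifting of D with respect to F. -/

import Mathlib

open CategoryTheory CategoryTheory.Limits

universe v₁ v₂ v₃ u₁ u₂ u₃

variable {I : Type u₁} [Category.{v₁} I] {B : Type u₂} [Category.{v₂} B]

noncomputable section

variable [HasBinaryProducts B] (Dh : I ⥤ B)

/-- `powD Dh X n` is the object `D̂^{n+1}(X)`: thus `powD Dh X 0 = D̂(X)` and
`powD Dh X (n+1) = D̂(X) ⨯ powD Dh X n`.  (Indices are shifted by one: the paper's
`D̂^n(X)`, `n ≥ 1`, is `powD Dh X (n-1)`.) -/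
def powD (X : I) : ℕ → B
  | 0 => Dh.obj X
  | n + 1 => Dh.obj X ⨯ powD X n

/-- `alphaD Dh X n` is `α^X_{n+1} : D̂^{n+1}(X) ⟶ D̂(X)`; `α^X_1` is the identity, and
`α^X_{n+2}` is the first product projection. -/
def alphaD (X : I) : ∀ n : ℕ, powD Dh X n ⟶ Dh.obj X
  | 0 => 𝟙 (Dh.obj X)
  | _ + 1 => prod.fst

/-- `piD Dh X n` is `π^X_{n+2} : D̂^{n+2}(X) ⟶ D̂^{n+1}(X)`, the second product projection. -/
def piD (X : I) (n : ℕ) : powD Dh X (n + 1) ⟶ powD Dh X n :=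
  prod.snd

/-- `powMapD Dh f n` is `D̂^{n+1}(f) : D̂^{n+1}(X) ⟶ D̂^{n+1}(Y)`, i.e. `D̂(f)` for `n = 0`
and the product morphism `D̂(f) ⨯ D̂^{n+1}(f)` afterwards. -/
def powMapD {X Y : I} (f : X ⟶ Y) : ∀ n : ℕ, powD Dh X n ⟶ powD Dh Y n
  | 0 => Dh.map f
  | n + 1 => prod.map (Dh.map f) (powMapD f n)

variable (D : I ⥤ B) (ε : D ⟶ Dh) (μ : Dh ⟶ D)

/-- `rhoD Dh D ε μ X` is `ρ_X = ε_X ∘ μ_X : D̂(X) ⟶ D̂(X)`. -/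
def rhoD (X : I) : Dh.obj X ⟶ Dh.obj X := μ.app X ≫ ε.app X

/-- `sigmaD Dh D ε μ X n` is `σ^X_{n+1} : D̂^{n+1}(X) ⟶ D̂^{n+2}(X)`, the pairing
`⟨ρ_X ∘ α^X_{n+1}, id⟩`. -/
def sigmaD (X : I) (n : ℕ) : powD Dh X n ⟶ powD Dh X (n + 1) :=
  prod.lift (alphaD Dh X n ≫ rhoD Dh D ε μ X) (𝟙 (powD Dh X n))

end

/-- The cocone over the chain `Functor.ofSequence f` determined by a compatible family
`t n : X n ⟶ pt` with `t n = f n ≫ t (n+1)` for all `n`. -/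
def chainCocone {C : Type u₃} [Category.{v₃} C] {X : ℕ → C} (f : ∀ n, X n ⟶ X (n + 1))
    (pt : C) (t : ∀ n, X n ⟶ pt) (ht : ∀ n, t n = f n ≫ t (n + 1)) :
    Cocone (Functor.ofSequence f) where
  pt := pt
  ι :=
    { app := t
      naturality := by
        have key : ∀ (m n : ℕ) (hmn : m ≤ n),
            (Functor.ofSequence f).map (homOfLE hmn) ≫ t n = t m := by
          intro m n hmn
          induction hmn with
          | refl => simp; exact Category.id_comp _
          | @step k hk ih =>
              rw [show (homOfLE (Nat.le_succ_of_le hk) : (m : ℕ) ⟶ (k + 1 : ℕ)) =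
                    homOfLE hk ≫ homOfLE (Nat.le_succ k) from Subsingleton.elim _ _,
                  Functor.map_comp]
              refine (Category.assoc _ _ _).trans ?_
              rw [Functor.ofSequence_map_homOfLE_succ]
              exact (congrArg ((Functor.ofSequence f).map (homOfLE hk) ≫ ·) (ht k).symm).trans ih
        intro m n g
        have hg : g = homOfLE (leOfHom g) := Subsingleton.elim _ _
        simp only [Functor.const_obj_obj, Functor.const_obj_map, Category.comp_id]
        rw [hg, key]
        exact (Category.comp_id _).symm }


/-- Auxiliary: a cocone over any `ℕ`-indexed functor determined by successor data. -/
def succCocone {C : Type u₃} [Category.{v₃} C] (K : ℕ ⥤ C) (pt : C)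
    (t : ∀ n : ℕ, K.obj n ⟶ pt)
    (ht : ∀ n : ℕ, t n = K.map (homOfLE (Nat.le_succ n)) ≫ t (n + 1)) : Cocone K where
  pt := pt
  ι :=
    { app := t
      naturality := by
        have key : ∀ (m n : ℕ) (hmn : m ≤ n), K.map (homOfLE hmn) ≫ t n = t m := by
          intro m n hmn
          induction hmn with
          | refl => simp
          | @step k hk ih =>
              rw [show (homOfLE (Nat.le_succ_of_le hk) : (m : ℕ) ⟶ (k + 1 : ℕ)) =
                    homOfLE hk ≫ homOfLE (Nat.le_succ k) from Subsingleton.elim _ _,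
                  Functor.map_comp, Category.assoc, ← ht, ih]
        intro m n g
        have hg : g = homOfLE (leOfHom g) := Subsingleton.elim _ _
        simp only [Functor.const_obj_obj, Functor.const_obj_map, Category.comp_id]
        rw [hg, key] }

/-- (Lemma `L:deltaequiv`, Section `S:LiftxD`.)  Assume `A` has
colimits of chains indexed by `ℕ` and `F` preserves them.  With `R(X) = colim_n Q^n(X)`
(limiting morphisms `t^X_n`) and `R(f)` as in Statement 10, there is a family of
morphisms `δ^X : F(R(X)) ⟶ D(X)`, uniquely determined by
`δ^X ∘ F(t^X_n) = μ_X ∘ ζ^X_n` for all `n`, each `δ^X` is an isomorphism, and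
`δ^Y ∘ F(R(f)) = D(f) ∘ δ^X` for every `f : X ⟶ Y`; i.e. `δ` is a natural isomorphism
from `R ⋙ F` to `D`, so `R` is a lifting of `D` with respect to `F`. -/
theorem R_lifts_D [HasBinaryProducts B] (D Dh : I ⥤ B) (ε : D ⟶ Dh) (μ : Dh ⟶ D)
    (hretr : ∀ X : I, ε.app X ≫ μ.app X = 𝟙 (D.obj X))
    {A : Type u₃} [Category.{v₃} A] (F : A ⥤ B)
    -- a lifting `E` of the unfolding of the retraction datum with respect to `F`
    -- (indices shifted by one: `E X n` is the paper's `E^{n+1}(X)`):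
    (E : I → ℕ → A)
    (s : ∀ (X : I) (n : ℕ), E X n ⟶ E X (n + 1))
    (Emap : ∀ {X Y : I}, (X ⟶ Y) → ∀ n : ℕ, E X n ⟶ E Y n)
    (hEid : ∀ (X : I) (n : ℕ), Emap (𝟙 X) n = 𝟙 (E X n))
    (hEcomp : ∀ {X Y Z : I} (f : X ⟶ Y) (g : Y ⟶ Z) (n : ℕ),
      Emap (f ≫ g) n = Emap f n ≫ Emap g n)
    (hEs : ∀ {X Y : I} (f : X ⟶ Y) (n : ℕ), s X n ≫ Emap f (n + 1) = Emap f n ≫ s Y n)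
    (η : ∀ (X : I) (n : ℕ), F.obj (E X n) ≅ powD Dh X n)
    (hηnat : ∀ {X Y : I} (f : X ⟶ Y) (n : ℕ),
      F.map (Emap f n) ≫ (η Y n).hom = (η X n).hom ≫ powMapD Dh f n)
    (hηs : ∀ (X : I) (n : ℕ),
      F.map (s X n) ≫ (η X (n + 1)).hom = (η X n).hom ≫ sigmaD Dh D ε μ X n)
    -- projectability witnesses `(a^X_n, ζ^X_n)` for `(α^X_n ∘ η^X_n, E^n(X), D̂(X))`:
    (Q : I → ℕ → A)
    (a : ∀ (X : I) (n : ℕ), E X n ⟶ Q X n)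
    (ha : ∀ (X : I) (n : ℕ), Epi (a X n))
    (ζ : ∀ (X : I) (n : ℕ), F.obj (Q X n) ≅ Dh.obj X)
    (hζ : ∀ (X : I) (n : ℕ),
      F.map (a X n) ≫ (ζ X n).hom = (η X n).hom ≫ alphaD Dh X n)
    (hwit : ∀ (X : I) (n : ℕ) {Z : A} (u : E X n ⟶ Z) (θ : F.obj (Q X n) ⟶ F.obj Z),
      F.map u = F.map (a X n) ≫ θ → ∃ g : Q X n ⟶ Z, u = a X n ≫ g ∧ θ = F.map g)
    (Qmap : ∀ {X Y : I}, (X ⟶ Y) → ∀ n : ℕ, Q X n ⟶ Q Y n)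
    (hQa : ∀ {X Y : I} (f : X ⟶ Y) (n : ℕ), a X n ≫ Qmap f n = Emap f n ≫ a Y n)
    (hQζ : ∀ {X Y : I} (f : X ⟶ Y) (n : ℕ),
      F.map (Qmap f n) ≫ (ζ Y n).hom = (ζ X n).hom ≫ Dh.map f)
    (sbar : ∀ (X : I) (n : ℕ), Q X n ⟶ Q X (n + 1))
    (hsbara : ∀ (X : I) (n : ℕ), a X n ≫ sbar X n = s X n ≫ a X (n + 1))
    (hsbarζ : ∀ (X : I) (n : ℕ),
      F.map (sbar X n) ≫ (ζ X (n + 1)).hom = (ζ X n).hom ≫ rhoD Dh D ε μ X)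
    [HasColimitsOfShape ℕ A] [PreservesColimitsOfShape ℕ F]
    (R : I → A)
    (t : ∀ (X : I) (n : ℕ), Q X n ⟶ R X)
    (ht : ∀ (X : I) (n : ℕ), t X n = sbar X n ≫ t X (n + 1))
    (hcolim : ∀ X : I, Nonempty (IsColimit (chainCocone (sbar X) (R X) (t X) (ht X))))
    (Rmap : ∀ {X Y : I}, (X ⟶ Y) → (R X ⟶ R Y))
    (hRt : ∀ {X Y : I} (f : X ⟶ Y) (n : ℕ), t X n ≫ Rmap f = Qmap f n ≫ t Y n) :
    ∃ δ : ∀ X : I, F.obj (R X) ⟶ D.obj X,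
      (∀ (X : I) (n : ℕ), F.map (t X n) ≫ δ X = (ζ X n).hom ≫ μ.app X) ∧
      (∀ (X : I) (δ' : F.obj (R X) ⟶ D.obj X),
        (∀ n : ℕ, F.map (t X n) ≫ δ' = (ζ X n).hom ≫ μ.app X) → δ' = δ X) ∧
      (∀ X : I, IsIso (δ X)) ∧
      (∀ {X Y : I} (f : X ⟶ Y), F.map (Rmap f) ≫ δ Y = δ X ≫ D.map f) := by
  classical
  have hcF : ∀ X : I, IsColimit (F.mapCocone (chainCocone (sbar X) (R X) (t X) (ht X))) :=
    fun X => isColimitOfPreserves F (hcolim X).some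
  have hmapsucc : ∀ (X : I) (n : ℕ),
      (Functor.ofSequence (sbar X) ⋙ F).map (homOfLE (Nat.le_succ n)) = F.map (sbar X n) := by
    intro X n
    simp [Functor.ofSequence_map_homOfLE_succ]
    rfl
  have hζμ : ∀ (X : I) (n : ℕ),
      F.map (sbar X n) ≫ (ζ X (n + 1)).hom ≫ μ.app X = (ζ X n).hom ≫ μ.app X := by
    intro X n
    rw [← Category.assoc, hsbarζ]
    simp [rhoD, hretr]
  let coc : ∀ X : I, Cocone (Functor.ofSequence (sbar X) ⋙ F) := fun X =>
    succCocone _ (D.obj X) (fun n => (ζ X n).hom ≫ μ.app X) (by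
      intro n
      rw [hmapsucc]
      exact (hζμ X n).symm)
  set δ : ∀ X : I, F.obj (R X) ⟶ D.obj X := fun X => (hcF X).desc (coc X) with hδ
  have hfac : ∀ (X : I) (n : ℕ), F.map (t X n) ≫ δ X = (ζ X n).hom ≫ μ.app X :=
    fun X n => (hcF X).fac (coc X) n
  have hFsbar : ∀ (X : I) (n : ℕ),
      F.map (sbar X n) = (ζ X n).hom ≫ rhoD Dh D ε μ X ≫ (ζ X (n + 1)).inv := by
    intro X n
    rw [← Category.assoc, ← hsbarζ]
    simp
  have hindep : ∀ (X : I) (n : ℕ),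
      ε.app X ≫ (ζ X n).inv ≫ F.map (t X n) = ε.app X ≫ (ζ X 0).inv ≫ F.map (t X 0) := by
    intro X n
    induction n with
    | zero => rfl
    | succ k ihk =>
        rw [← ihk, ht X k, F.map_comp, hFsbar]
        simp only [rhoD, Category.assoc, Iso.inv_hom_id_assoc]
        rw [← Category.assoc (ε.app X), ← Category.assoc (ε.app X), hretr,
          Category.id_comp]
  refine ⟨δ, hfac, ?_, ?_, ?_⟩
  · intro X δ' h
    apply (hcF X).hom_ext
    intro n
    exact (h n).trans (hfac X n).symm
  · intro X
    refine ⟨ε.app X ≫ (ζ X 0).inv ≫ F.map (t X 0), ?_, ?_⟩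
    · apply (hcF X).hom_ext
      intro n
      have : F.map (t X n) ≫ δ X ≫ ε.app X ≫ (ζ X 0).inv ≫ F.map (t X 0) =
          (ζ X n).hom ≫ μ.app X ≫ ε.app X ≫ (ζ X (n + 1)).inv ≫ F.map (t X (n + 1)) := by
        rw [← Category.assoc, hfac, Category.assoc, ← hindep X (n + 1)]
      show F.map (t X n) ≫ δ X ≫ _ = F.map (t X n) ≫ 𝟙 _
      rw [this, Category.comp_id, ht X n, F.map_comp, hFsbar]
      simp [rhoD]
    · rw [Category.assoc, Category.assoc, hfac, ← Category.assoc (ζ X 0).inv,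
        Iso.inv_hom_id, Category.id_comp, hretr]
  · intro X Y f
    apply (hcF X).hom_ext
    intro n
    show F.map (t X n) ≫ F.map (Rmap f) ≫ δ Y = F.map (t X n) ≫ δ X ≫ D.map f
    rw [← Category.assoc, ← F.map_comp, hRt, F.map_comp, Category.assoc, hfac,
      ← Category.assoc, hQζ, Category.assoc, μ.naturality, ← Category.assoc,
      ← Category.assoc, hfac]
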